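/- Let a : [-1,0] → ℝ be Lipschitz continuous with a(s) > 0 for all s, let μ_cr := (∫_{-1}^0 a(t)^3 dt)^{-1}, and let ν < 0. Suppose Φ : [-1,0] → ℝ is continuously differentiable with Φ(-1) = 0, the function g(s) := Φ'(s)/a(s)^3 is continuously differentiable on [-1,0] with g'(s) = -ν Φ(s)/a(s) for all s ∈ (-1,0), and the boundary condition -Φ'(0)/a(0)^3 + μ_cr Φ(0) = 0 holds. Then Φ ≡ 0. (That is, the Sturm–Liouville problem -(Φ'/a^3)' = ν Φ/a, Φ(-1) = 0, -Φ'(0)/a(0)^3 + μ_cr Φ(0) = 0 has no negative eigenvalues, so ν_0 = 0 is its smallest eigenvalue.) -/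

import Mathlib

open Set MeasureTheory intervalIntegral

theorem sturm_liouville_no_negative_eigenvalues_critical
    (a : ℝ → ℝ) (K : NNReal)
    (hlip : LipschitzOnWith K a (Set.Icc (-1 : ℝ) 0))
    (hpos : ∀ s ∈ Set.Icc (-1 : ℝ) 0, 0 < a s)
    (μcr : ℝ) (hμ : μcr = (∫ t in (-1 : ℝ)..0, a t ^ 3)⁻¹)
    (ν : ℝ) (hν : ν < 0)
    (Φ Φ' g' : ℝ → ℝ)
    (hΦ : ∀ s ∈ Set.Icc (-1 : ℝ) 0,
      HasDerivWithinAt Φ (Φ' s) (Set.Icc (-1 : ℝ) 0) s)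
    (hΦ'cont : ContinuousOn Φ' (Set.Icc (-1 : ℝ) 0))
    (hg : ∀ s ∈ Set.Icc (-1 : ℝ) 0,
      HasDerivWithinAt (fun t => Φ' t / a t ^ 3) (g' s) (Set.Icc (-1 : ℝ) 0) s)
    (hg'cont : ContinuousOn g' (Set.Icc (-1 : ℝ) 0))
    (hode : ∀ s ∈ Set.Ioo (-1 : ℝ) 0, g' s = -ν * Φ s / a s)
    (hbc_bottom : Φ (-1) = 0)
    (hbc_top : -(Φ' 0) / a 0 ^ 3 + μcr * Φ 0 = 0) :
    ∀ s ∈ Set.Icc (-1 : ℝ) 0, Φ s = 0 := by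
  have h10 : (-1 : ℝ) ≤ 0 := by norm_num
  have huIcc : Set.uIcc (-1 : ℝ) 0 = Set.Icc (-1 : ℝ) 0 := Set.uIcc_of_le h10
  have hane : ∀ s ∈ Set.Icc (-1 : ℝ) 0, a s ≠ 0 := fun s hs => (hpos s hs).ne'
  have ha3ne : ∀ s ∈ Set.Icc (-1 : ℝ) 0, a s ^ 3 ≠ 0 := fun s hs => pow_ne_zero 3 (hane s hs)
  have haC : ContinuousOn a (Set.Icc (-1 : ℝ) 0) := hlip.continuousOn
  have ha3C : ContinuousOn (fun t => a t ^ 3) (Set.Icc (-1 : ℝ) 0) := haC.pow 3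
  have hΦC : ContinuousOn Φ (Set.Icc (-1 : ℝ) 0) := fun s hs => (hΦ s hs).continuousWithinAt
  have hGC : ContinuousOn (fun t => Φ' t / a t ^ 3) (Set.Icc (-1 : ℝ) 0) :=
    hΦ'cont.div ha3C ha3ne
  -- integrability helpers
  have hia3 : IntervalIntegrable (fun t => a t ^ 3) volume (-1) 0 := by
    apply ContinuousOn.intervalIntegrable; rwa [huIcc]
  have hiΦ' : IntervalIntegrable Φ' volume (-1) 0 := by
    apply ContinuousOn.intervalIntegrable; rwa [huIcc]
  have hfC : ContinuousOn (fun x => Φ x ^ 2 / a x) (Set.Icc (-1 : ℝ) 0) :=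
    (hΦC.pow 2).div haC hane
  have hif : IntervalIntegrable (fun x => Φ x ^ 2 / a x) volume (-1) 0 := by
    apply ContinuousOn.intervalIntegrable; rwa [huIcc]
  have hJC : ContinuousOn (fun x => Φ' x ^ 2 / a x ^ 3) (Set.Icc (-1 : ℝ) 0) :=
    (hΦ'cont.pow 2).div ha3C ha3ne
  have hiJ : IntervalIntegrable (fun x => Φ' x ^ 2 / a x ^ 3) volume (-1) 0 := by
    apply ContinuousOn.intervalIntegrable; rwa [huIcc]
  set I : ℝ := ∫ t in (-1 : ℝ)..0, a t ^ 3 with hIdef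
  set J : ℝ := ∫ t in (-1 : ℝ)..0, Φ' t ^ 2 / a t ^ 3 with hJdef
  set P : ℝ := ∫ t in (-1 : ℝ)..0, Φ t ^ 2 / a t with hPdef
  have hI : 0 < I :=
    intervalIntegral_pos_of_pos_on hia3
      (fun x hx => pow_pos (hpos x (Set.Ioo_subset_Icc_self hx)) 3) (by norm_num)
  -- FTC for Φ
  have hΦ0 : ∫ x in (-1 : ℝ)..0, Φ' x = Φ 0 := by
    have := integral_eq_sub_of_hasDeriv_right_of_le h10 hΦC
      (fun x hx => (((hΦ x (Set.Ioo_subset_Icc_self hx)).hasDerivAt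
        (Icc_mem_nhds hx.1 hx.2)).hasDerivWithinAt)) hiΦ'
    rw [this, hbc_bottom, sub_zero]
  -- FTC for q = (Φ'/a³)·Φ
  have hqder : ∀ x ∈ Set.Ioo (-1 : ℝ) 0,
      HasDerivWithinAt (fun t => (Φ' t / a t ^ 3) * Φ t)
        (-ν * (Φ x ^ 2 / a x) + Φ' x ^ 2 / a x ^ 3) (Set.Ioi x) x := by
    intro x hx
    have hx' := Set.Ioo_subset_Icc_self hx
    have hmem := Icc_mem_nhds hx.1 hx.2
    have h1 := (hg x hx').hasDerivAt hmem
    have h2 := (hΦ x hx').hasDerivAt hmem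
    have h3 := h1.mul h2
    have heq : g' x * Φ x + (Φ' x / a x ^ 3) * Φ' x
        = -ν * (Φ x ^ 2 / a x) + Φ' x ^ 2 / a x ^ 3 := by
      rw [hode x hx]; ring
    rw [heq] at h3
    exact h3.hasDerivWithinAt
  have hqint : IntervalIntegrable
      (fun x => -ν * (Φ x ^ 2 / a x) + Φ' x ^ 2 / a x ^ 3) volume (-1) 0 :=
    (hif.const_mul (-ν)).add hiJ
  have hftc2 : ∫ x in (-1 : ℝ)..0, (-ν * (Φ x ^ 2 / a x) + Φ' x ^ 2 / a x ^ 3)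
      = μcr * Φ 0 * Φ 0 := by
    have := integral_eq_sub_of_hasDeriv_right_of_le h10 (hGC.mul hΦC) hqder hqint
    rw [this]
    simp only [Pi.mul_apply]
    rw [hbc_bottom, mul_zero, sub_zero]
    have h0mem : (0 : ℝ) ∈ Set.Icc (-1 : ℝ) 0 := by constructor <;> norm_num
    have : Φ' 0 / a 0 ^ 3 = μcr * Φ 0 := by
      have hne := neg_div (a 0 ^ 3) (Φ' 0)
      linarith [hbc_top, hne]
    rw [this]
  have hsplit : -ν * P + J = μcr * Φ 0 * Φ 0 := by
    rw [hPdef, hJdef, ← intervalIntegral.integral_const_mul,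
      ← integral_add (hif.const_mul (-ν)) hiJ]
    exact hftc2
  -- Cauchy–Schwarz via nonnegative square
  have hCS : 0 ≤ I ^ 2 * J - 2 * I * Φ 0 * Φ 0 + Φ 0 ^ 2 * I := by
    have hnn : 0 ≤ ∫ x in (-1 : ℝ)..0, (Φ' x * I - Φ 0 * a x ^ 3) ^ 2 / a x ^ 3 :=
      integral_nonneg h10 (fun u hu => div_nonneg (sq_nonneg _) (pow_pos (hpos u hu) 3).le)
    have hexp : (∫ x in (-1 : ℝ)..0, (Φ' x * I - Φ 0 * a x ^ 3) ^ 2 / a x ^ 3)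
        = I ^ 2 * J - 2 * I * Φ 0 * Φ 0 + Φ 0 ^ 2 * I := by
      have hcongr : ∀ x ∈ Set.uIcc (-1 : ℝ) 0,
          (Φ' x * I - Φ 0 * a x ^ 3) ^ 2 / a x ^ 3
          = I ^ 2 * (Φ' x ^ 2 / a x ^ 3) - 2 * I * Φ 0 * Φ' x + Φ 0 ^ 2 * a x ^ 3 := by
        intro x hx
        rw [huIcc] at hx
        have h := ha3ne x hx
        have h' : a x ≠ 0 := hane x hx
        field_simp
        ring
      rw [intervalIntegral.integral_congr hcongr,
        integral_add ((hiJ.const_mul _).sub (hiΦ'.const_mul _)) (hia3.const_mul _),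
        integral_sub (hiJ.const_mul _) (hiΦ'.const_mul _),
        intervalIntegral.integral_const_mul, intervalIntegral.integral_const_mul, intervalIntegral.integral_const_mul, hΦ0, ← hIdef, ← hJdef]
    rw [hexp] at hnn
    exact hnn
  have hμJ : μcr * Φ 0 * Φ 0 ≤ J := by
    have h1 : I * (Φ 0 * Φ 0) ≤ I * (I * J) := by nlinarith
    have h2 : Φ 0 * Φ 0 ≤ I * J := le_of_mul_le_mul_left h1 hI
    rw [hμ, mul_assoc, inv_mul_le_iff₀ hI]
    linarith [h2]
  have hP0 : P = 0 := by
    have hPnn : 0 ≤ P :=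
      integral_nonneg h10 (fun u hu => div_nonneg (sq_nonneg _) (hpos u hu).le)
    have hPle : -ν * P ≤ 0 := by linarith
    have hPle' : P ≤ 0 := by
      by_contra h
      push_neg at h
      nlinarith [mul_pos (neg_pos.mpr hν) h]
    exact le_antisymm hPle' hPnn
  -- conclude Φ = 0 pointwise
  intro s hs
  by_contra hne
  have hfs : 0 < Φ s ^ 2 / a s :=
    div_pos (by positivity) (hpos s hs)
  have hev : (fun x => Φ x ^ 2 / a x) ⁻¹' Set.Ioi 0 ∈ nhdsWithin s (Set.Icc (-1 : ℝ) 0) :=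
    hfC s hs (Ioi_mem_nhds hfs)
  obtain ⟨U, hUopen, hsU, hUsub⟩ := mem_nhdsWithin.mp hev
  obtain ⟨ε, hε, hball⟩ := Metric.isOpen_iff.mp hUopen s hsU
  set c : ℝ := max (-1) (s - ε) with hc
  set d : ℝ := min 0 (s + ε) with hd
  have hcd : c < d := by
    rw [hc, hd]
    apply max_lt <;> apply lt_min
    · norm_num
    · linarith [hs.1]
    · linarith [hs.2]
    · linarith
  have hsub : Set.Ioo c d ⊆ Set.Icc (-1 : ℝ) 0 := fun x hx =>
    ⟨le_trans (le_max_left _ _) hx.1.le, le_trans hx.2.le (min_le_left _ _)⟩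
  have hposf : ∀ x ∈ Set.Ioo c d, 0 < Φ x ^ 2 / a x := by
    intro x hx
    have hxI : x ∈ Set.Icc (-1 : ℝ) 0 := hsub hx
    have hxball : x ∈ Metric.ball s ε := by
      rw [Real.ball_eq_Ioo]
      exact ⟨lt_of_le_of_lt (le_max_right _ _) hx.1, lt_of_lt_of_le hx.2 (min_le_right _ _)⟩
    exact hUsub ⟨hball hxball, hxI⟩
  have hmono : Set.uIcc c d ⊆ Set.uIcc (-1 : ℝ) 0 := by
    rw [huIcc, Set.uIcc_of_le hcd.le]
    exact Set.Icc_subset_Icc (le_max_left _ _) (min_le_left _ _)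
  have hi1 : IntervalIntegrable (fun x => Φ x ^ 2 / a x) volume c d := hif.mono_set hmono
  have hmid : 0 < ∫ x in c..d, Φ x ^ 2 / a x :=
    intervalIntegral_pos_of_pos_on hi1 hposf hcd
  have hcI : c ∈ Set.Icc (-1 : ℝ) 0 :=
    ⟨le_max_left _ _, le_trans hcd.le (min_le_left _ _)⟩
  have hdI : d ∈ Set.Icc (-1 : ℝ) 0 :=
    ⟨le_trans (le_max_left _ _) hcd.le, min_le_left _ _⟩
  have hi2 : IntervalIntegrable (fun x => Φ x ^ 2 / a x) volume (-1) c := by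
    apply hif.mono_set
    rw [huIcc, Set.uIcc_of_le hcI.1]
    exact Set.Icc_subset_Icc le_rfl hcI.2
  have hi3 : IntervalIntegrable (fun x => Φ x ^ 2 / a x) volume d 0 := by
    apply hif.mono_set
    rw [huIcc, Set.uIcc_of_le hdI.2]
    exact Set.Icc_subset_Icc hdI.1 le_rfl
  have h1nn : 0 ≤ ∫ x in (-1 : ℝ)..c, Φ x ^ 2 / a x :=
    integral_nonneg hcI.1 (fun u hu => div_nonneg (sq_nonneg _)
      (hpos u ⟨hu.1, le_trans hu.2 hcI.2⟩).le)
  have h3nn : 0 ≤ ∫ x in d..(0 : ℝ), Φ x ^ 2 / a x :=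
    integral_nonneg hdI.2 (fun u hu => div_nonneg (sq_nonneg _)
      (hpos u ⟨le_trans hdI.1 hu.1, hu.2⟩).le)
  have hP' : P = (∫ x in (-1 : ℝ)..c, Φ x ^ 2 / a x) + (∫ x in c..d, Φ x ^ 2 / a x)
      + ∫ x in d..(0 : ℝ), Φ x ^ 2 / a x := by
    rw [hPdef, ← integral_add_adjacent_intervals (hi2.trans hi1) hi3,
      ← integral_add_adjacent_intervals hi2 hi1]
  rw [hP0] at hP'
  linarith
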